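/- Let p be prime and f : Z_p × Z_p → Z_p with Δ(f) = k+1 ≥ 3, where f contains a monomial divisible by x²y (i.e., some nonzero coefficient λ_{ij} with i ≥ 2, j ≥ 1, i+j = k+1 and no nonzero λ_{i'j'} with i',j' ≥ 1 and i'+j' > k+1). Then the difference function f^{(1)}(x,y) := f(x+1,y) - f(x,y) satisfies Δ(f^{(1)}) = k. -/

import Mathlib

open Finset Polynomial

lemma key_univ {p : ℕ} [Fact p.Prime] (g : ℕ → ZMod p)
    (h : ∀ x : ZMod p, ∑ i ∈ Finset.range p, g i * x ^ i = 0) :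
    ∀ i < p, g i = 0 := by
  have hp : 0 < p := (Fact.out : p.Prime).pos
  set q : Polynomial (ZMod p) := ∑ i ∈ Finset.range p, Polynomial.C (g i) * Polynomial.X ^ i with hq
  have hq0 : q = 0 := by
    apply Polynomial.eq_zero_of_natDegree_lt_card_of_eval_eq_zero q (f := (id : ZMod p → ZMod p))
      Function.injective_id
    · intro x
      simpa [q, Polynomial.eval_finset_sum] using h x
    · rw [ZMod.card]
      calc q.natDegree ≤ p - 1 := by
            apply Polynomial.natDegree_sum_le_of_forall_le
            intro i hi
            refine (Polynomial.natDegree_C_mul_le _ _).trans ?_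
            simp only [Polynomial.natDegree_X_pow]
            have := Finset.mem_range.mp hi; omega
        _ < p := by omega
  intro i hi
  have : q.coeff i = g i := by
    rw [hq, Polynomial.finset_sum_coeff]
    rw [Finset.sum_eq_single i]
    · simp
    · intro b _ hb; simp [Polynomial.coeff_C_mul, Polynomial.coeff_X_pow, Ne.symm hb]
    · intro hbi; exact absurd (Finset.mem_range.mpr hi) hbi
  rw [hq0] at this
  simpa using this.symm

lemma key_bivar {p : ℕ} [Fact p.Prime] (d : ℕ → ℕ → ZMod p)
    (h : ∀ x y : ZMod p, ∑ i ∈ Finset.range p, ∑ j ∈ Finset.range p, d i j * x ^ i * y ^ j = 0) :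
    ∀ i < p, ∀ j < p, d i j = 0 := by
  intro i hi j hj
  have h1 : ∀ y : ZMod p, ∀ i < p, (∑ j ∈ Finset.range p, d i j * y ^ j) = 0 := by
    intro y
    apply key_univ (fun i => ∑ j ∈ Finset.range p, d i j * y ^ j)
    intro x
    rw [← h x y]
    apply Finset.sum_congr rfl
    intro i _
    rw [Finset.sum_mul]
    apply Finset.sum_congr rfl
    intro j _; ring
  exact key_univ (fun j => d i j) (fun y => h1 y i hi) j hj

theorem stmt_4' (p : ℕ) [Fact p.Prime] (lam : ℕ → ℕ → ZMod p) (k : ℕ)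
    (hDelta : (((Finset.range p ×ˢ Finset.range p).filter
      (fun ij => 1 ≤ ij.1 ∧ 1 ≤ ij.2 ∧ lam ij.1 ij.2 ≠ 0)).sup
    (fun ij => ij.1 + ij.2)) = k + 1)
    (hk : 3 ≤ k + 1)
    (hle : k + 1 ≤ p - 1)
    (hx2y : ∃ i j : ℕ, 2 ≤ i ∧ 1 ≤ j ∧ i + j = k + 1 ∧ lam i j ≠ 0)
    (lam' : ℕ → ℕ → ZMod p)
    (hrep : ∀ x y : ZMod p,
      (∑ i ∈ Finset.range p, ∑ j ∈ Finset.range p, lam i j * (x + 1) ^ i * y ^ j) -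
        (∑ i ∈ Finset.range p, ∑ j ∈ Finset.range p, lam i j * x ^ i * y ^ j) =
      ∑ i ∈ Finset.range p, ∑ j ∈ Finset.range p, lam' i j * x ^ i * y ^ j) :
    (((Finset.range p ×ˢ Finset.range p).filter
      (fun ij => 1 ≤ ij.1 ∧ 1 ≤ ij.2 ∧ lam' ij.1 ij.2 ≠ 0)).sup
    (fun ij => ij.1 + ij.2)) = k := by
  have hp4 : 4 ≤ p := by
    have := (Fact.out : p.Prime).two_le; omega
  set mu : ℕ → ℕ → ZMod p :=
    fun a j => ∑ i ∈ Finset.Ico (a+1) p, (i.choose a : ZMod p) * lam i j with hmu_def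
  -- binomial identity
  have hbin : ∀ (x : ZMod p) (i : ℕ),
      (∑ a ∈ Finset.range i, (i.choose a : ZMod p) * x ^ a) = (x+1)^i - x^i := by
    intro x i
    have h := add_pow x 1 i
    simp only [one_pow, mul_one] at h
    rw [h, Finset.sum_range_succ, Nat.choose_self]
    push_cast
    rw [Finset.sum_congr rfl (fun a _ => mul_comm ((i.choose a : ZMod p)) (x^a))]
    ring
  -- evaluation of mu
  have hmu_eval : ∀ x y : ZMod p,
      (∑ a ∈ Finset.range p, ∑ j ∈ Finset.range p, mu a j * x ^ a * y ^ j) =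
      (∑ i ∈ Finset.range p, ∑ j ∈ Finset.range p, lam i j * (x + 1) ^ i * y ^ j) -
        (∑ i ∈ Finset.range p, ∑ j ∈ Finset.range p, lam i j * x ^ i * y ^ j) := by
    intro x y
    have step1 : (∑ a ∈ Finset.range p, ∑ j ∈ Finset.range p, mu a j * x ^ a * y ^ j) =
        ∑ a ∈ Finset.range p, ∑ i ∈ Finset.Ico (a+1) p, ∑ j ∈ Finset.range p,
          (i.choose a : ZMod p) * lam i j * x ^ a * y ^ j := by
      refine Finset.sum_congr rfl (fun a _ => ?_)
      rw [Finset.sum_comm]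
      refine Finset.sum_congr rfl (fun j _ => ?_)
      simp only [hmu_def, Finset.sum_mul]
    rw [step1, Finset.range_eq_Ico, Finset.sum_Ico_Ico_comm' 0 p, ← Finset.range_eq_Ico]
    have step2 : ∀ i ∈ Finset.range p,
        (∑ a ∈ Finset.range i, ∑ j ∈ Finset.range p,
          (i.choose a : ZMod p) * lam i j * x ^ a * y ^ j) =
        ∑ j ∈ Finset.range p,
          (lam i j * (x+1)^i * y^j - lam i j * x^i * y^j) := by
      intro i _
      rw [Finset.sum_comm]
      refine Finset.sum_congr rfl (fun j _ => ?_)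
      have : (∑ a ∈ Finset.range i, (i.choose a : ZMod p) * lam i j * x ^ a * y ^ j)
          = (∑ a ∈ Finset.range i, (i.choose a : ZMod p) * x ^ a) * (lam i j * y ^ j) := by
        rw [Finset.sum_mul]
        exact Finset.sum_congr rfl (fun a _ => by ring)
      rw [this, hbin]
      ring
    simp only [← Finset.range_eq_Ico]
    rw [Finset.sum_congr rfl step2]
    rw [← Finset.sum_sub_distrib]
    refine Finset.sum_congr rfl (fun i _ => ?_)
    rw [← Finset.sum_sub_distrib]
  -- lam' = mu on range p × range p
  have hlam' : ∀ a < p, ∀ j < p, lam' a j = mu a j := by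
    have hz : ∀ x y : ZMod p,
        (∑ i ∈ Finset.range p, ∑ j ∈ Finset.range p,
          (lam' i j - mu i j) * x ^ i * y ^ j) = 0 := by
      intro x y
      have e : (∑ i ∈ Finset.range p, ∑ j ∈ Finset.range p,
            (lam' i j - mu i j) * x ^ i * y ^ j) =
          (∑ i ∈ Finset.range p, ∑ j ∈ Finset.range p, lam' i j * x ^ i * y ^ j) -
          (∑ i ∈ Finset.range p, ∑ j ∈ Finset.range p, mu i j * x ^ i * y ^ j) := by
        rw [← Finset.sum_sub_distrib]
        refine Finset.sum_congr rfl (fun i _ => ?_)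
        rw [← Finset.sum_sub_distrib]
        exact Finset.sum_congr rfl (fun j _ => by ring)
      rw [e, ← hrep x y, hmu_eval x y, sub_self]
    intro a ha j hj
    have := key_bivar (fun i j => lam' i j - mu i j) hz a ha j hj
    simpa [sub_eq_zero] using this
  -- lam vanishes above total degree k+1
  have lam_zero : ∀ i j, i < p → j < p → 1 ≤ i → 1 ≤ j → k + 1 < i + j → lam i j = 0 := by
    intro i j hip hjp hi hj hij
    by_contra hne
    have hmem : (i, j) ∈ ((Finset.range p ×ˢ Finset.range p).filter
        (fun ij => 1 ≤ ij.1 ∧ 1 ≤ ij.2 ∧ lam ij.1 ij.2 ≠ 0)) := by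
      simp [Finset.mem_filter, Finset.mem_product, hip, hjp, hi, hj, hne]
    have hsup : i + j ≤ (((Finset.range p ×ˢ Finset.range p).filter
        (fun ij => 1 ≤ ij.1 ∧ 1 ≤ ij.2 ∧ lam ij.1 ij.2 ≠ 0)).sup
        (fun ij => ij.1 + ij.2)) := Finset.le_sup (f := fun ij : ℕ × ℕ => ij.1 + ij.2) hmem
    rw [hDelta] at hsup
    omega
  obtain ⟨i0, j0, hi0, hj0, hsum, hne⟩ := hx2y
  have hi0p : i0 < p := by omega
  have hj0p : j0 < p := by omega
  -- the witness coefficient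
  have hwit : lam' (i0 - 1) j0 ≠ 0 := by
    rw [hlam' (i0-1) (by omega) j0 hj0p]
    simp only [hmu_def]
    have h1 : i0 - 1 + 1 = i0 := by omega
    rw [h1]
    rw [Finset.sum_eq_single_of_mem i0 (Finset.mem_Ico.mpr ⟨le_refl _, hi0p⟩)]
    · have hch : (i0.choose (i0 - 1)) = i0 := by
        have := Nat.choose_symm (n := i0) (k := 1) (by omega)
        rw [Nat.choose_one_right] at this
        omega
      rw [hch]
      intro hcontra
      rcases mul_eq_zero.mp hcontra with h | h
      · rw [ZMod.natCast_eq_zero_iff] at h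
        have := Nat.le_of_dvd (by omega) h
        omega
      · exact hne h
    · intro b hb hbne
      have hb' := Finset.mem_Ico.mp hb
      rw [lam_zero b j0 hb'.2 hj0p (by omega) hj0 (by omega), mul_zero]
  -- upper bound
  have hub : ∀ ij ∈ ((Finset.range p ×ˢ Finset.range p).filter
      (fun ij => 1 ≤ ij.1 ∧ 1 ≤ ij.2 ∧ lam' ij.1 ij.2 ≠ 0)),
      ij.1 + ij.2 ≤ k := by
    rintro ⟨a, j⟩ hmem
    simp only [Finset.mem_filter, Finset.mem_product, Finset.mem_range] at hmem
    obtain ⟨⟨hap, hjp⟩, ha1, hj1, hne'⟩ := hmem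
    by_contra hgt
    apply hne'
    rw [hlam' a hap j hjp]
    simp only [hmu_def]
    apply Finset.sum_eq_zero
    intro i hi
    have hi' := Finset.mem_Ico.mp hi
    rw [lam_zero i j hi'.2 hjp (by omega) hj1 (by omega), mul_zero]
  refine le_antisymm (Finset.sup_le hub) ?_
  have hmem : ((i0 - 1, j0) : ℕ × ℕ) ∈ ((Finset.range p ×ˢ Finset.range p).filter
      (fun ij => 1 ≤ ij.1 ∧ 1 ≤ ij.2 ∧ lam' ij.1 ij.2 ≠ 0)) := by
    simp only [Finset.mem_filter, Finset.mem_product, Finset.mem_range]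
    exact ⟨⟨by omega, hj0p⟩, by omega, hj0, hwit⟩
  have := Finset.le_sup (f := fun ij : ℕ × ℕ => ij.1 + ij.2) hmem
  simpa [show i0 - 1 + j0 = k by omega] using this



/-- `Delta p lam` is the maximum of `i + j` over pairs `1 ≤ i, j ≤ p - 1`
(equivalently `i, j < p`) with `lam i j ≠ 0`, and `0` if there is no such pair. -/
def Delta (p : ℕ) (lam : ℕ → ℕ → ZMod p) : ℕ :=
  ((Finset.range p ×ˢ Finset.range p).filter
      (fun ij => 1 ≤ ij.1 ∧ 1 ≤ ij.2 ∧ lam ij.1 ij.2 ≠ 0)).sup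
    (fun ij => ij.1 + ij.2)

theorem stmt_4 (p : ℕ) [Fact p.Prime] (lam : ℕ → ℕ → ZMod p) (k : ℕ)
    (hDelta : Delta p lam = k + 1)
    (hk : 3 ≤ k + 1)
    (hle : k + 1 ≤ p - 1)
    (hx2y : ∃ i j : ℕ, 2 ≤ i ∧ 1 ≤ j ∧ i + j = k + 1 ∧ lam i j ≠ 0)
    (lam' : ℕ → ℕ → ZMod p)
    (hrep : ∀ x y : ZMod p,
      (∑ i ∈ Finset.range p, ∑ j ∈ Finset.range p, lam i j * (x + 1) ^ i * y ^ j) -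
        (∑ i ∈ Finset.range p, ∑ j ∈ Finset.range p, lam i j * x ^ i * y ^ j) =
      ∑ i ∈ Finset.range p, ∑ j ∈ Finset.range p, lam' i j * x ^ i * y ^ j) :
    Delta p lam' = k := by
  unfold Delta at hDelta ⊢
  exact stmt_4' p lam k hDelta hk hle hx2y lam' hrep
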